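/- arXiv:1404.5107 — 6 statements merged into one kernel-verified Lean document; each statement's English description precedes it below -/
import Mathlib

section
/- Let Γ be an lcsc group and let p : A → B and r : B → C be Γ-maps between Lebesgue Γ-spaces. If p and r are both relatively isometrically ergodic, then the composition r ∘ p : A → C is relatively isometrically ergodic. -/
open MeasureTheory Filter Topology
open scoped ENNReal

/-- A probability measure on a Borel `Γ`-space is *quasi-invariant* if every group element
pushes the measure to an equivalent one. -/
def QuasiInvariant (Γ : Type*) {X : Type*} [Group Γ] [MulAction Γ X]
    [MeasurableSpace X] (μ : Measure X) : Prop :=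
  ∀ g : Γ, Measure.map (fun x => g • x) μ ≪ μ ∧ μ ≪ Measure.map (fun x => g • x) μ

/-- A *fiber-wise isometric `Γ`-action* on a Borel map `q : 𝓜 → V`: a Borel metric on `q`
(a Borel function `d` on `𝓜 ×_V 𝓜` restricting to a separable metric on each fiber),
with compatible `Γ`-actions on `𝓜` and `V` acting isometrically between fibers. -/
structure FiberwiseIsometricAction (Γ : Type*) [Group Γ]
    (𝓜 V : Type*) [MeasurableSpace 𝓜] [MeasurableSpace V]
    [MulAction Γ 𝓜] [MulAction Γ V] where
  q : 𝓜 → V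
  measurable_q : Measurable q
  d : 𝓜 → 𝓜 → ℝ≥0∞
  measurable_d : Measurable fun p : 𝓜 × 𝓜 => d p.1 p.2
  equivariant_q : ∀ (g : Γ) (m : 𝓜), q (g • m) = g • q m
  d_self : ∀ m, d m m = 0
  eq_of_d_eq_zero : ∀ m m', q m = q m' → d m m' = 0 → m = m'
  d_comm : ∀ m m', d m m' = d m' m
  d_triangle : ∀ m₁ m₂ m₃, q m₁ = q m₂ → q m₂ = q m₃ →
    d m₁ m₃ ≤ d m₁ m₂ + d m₂ m₃
  d_lt_top : ∀ m m', q m = q m' → d m m' < ⊤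
  separable_fibers : ∀ v : V, ∃ D : Set 𝓜, D.Countable ∧ D ⊆ q ⁻¹' {v} ∧
    ∀ m, q m = v → ∀ ε : ℝ≥0∞, 0 < ε → ∃ m' ∈ D, d m m' < ε
  isometric_smul : ∀ (g : Γ) (m m' : 𝓜), q m = q m' → d (g • m) (g • m') = d m m'

/-- A `Γ`-map `p : A → B` between Lebesgue `Γ`-spaces is *relatively isometrically ergodic* if
for every fiber-wise isometric `Γ`-action on a Borel map `q : 𝓜 → V` between standard Borel
`Γ`-spaces, and all compatible `Γ`-maps `f : A → 𝓜`, `f₀ : B → V` (i.e. `q ∘ f = f₀ ∘ p` a.e.),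
there is a compatible `Γ`-map `f₁ : B → 𝓜` with `q ∘ f₁ = f₀` a.e. and `f₁ ∘ p = f` a.e. -/
def RelIsometricallyErgodic (Γ : Type*) [Group Γ] [MeasurableSpace Γ]
    {A B : Type*} [MeasurableSpace A] [MeasurableSpace B]
    [MulAction Γ A] [MulAction Γ B]
    (μ : Measure A) (ν : Measure B) (p : A → B) : Prop :=
  ∀ (𝓜 V : Type*) [MeasurableSpace 𝓜] [MeasurableSpace V]
    [StandardBorelSpace 𝓜] [StandardBorelSpace V]
    [MulAction Γ 𝓜] [MulAction Γ V] [MeasurableSMul Γ 𝓜] [MeasurableSMul Γ V]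
    (F : FiberwiseIsometricAction Γ 𝓜 V) (f : A → 𝓜) (f₀ : B → V),
    Measurable f → Measurable f₀ →
    (∀ g : Γ, ∀ᵐ a ∂μ, f (g • a) = g • f a) →
    (∀ g : Γ, ∀ᵐ b ∂ν, f₀ (g • b) = g • f₀ b) →
    (∀ᵐ a ∂μ, F.q (f a) = f₀ (p a)) →
    ∃ f₁ : B → 𝓜, Measurable f₁ ∧
      (∀ g : Γ, ∀ᵐ b ∂ν, f₁ (g • b) = g • f₁ b) ∧
      (∀ᵐ b ∂ν, F.q (f₁ b) = f₀ b) ∧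
      (∀ᵐ a ∂μ, f₁ (p a) = f a)

/-- A Lebesgue `Γ`-space `(X, μ)` is *isometrically ergodic* if for every separable metric
space `M` with an isometric `Γ`-action, every `Γ`-equivariant Borel map `X → M` is essentially
constant, its essential value being a `Γ`-fixed point. -/
def IsometricallyErgodic (Γ : Type*) [Group Γ] {X : Type*} [MeasurableSpace X]
    [MulAction Γ X] (μ : Measure X) : Prop :=
  ∀ (M : Type*) [MetricSpace M] [MeasurableSpace M] [BorelSpace M]
    [TopologicalSpace.SeparableSpace M] [MulAction Γ M],
    (∀ (g : Γ) (x y : M), dist (g • x) (g • y) = dist x y) →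
    ∀ f : X → M, Measurable f →
      (∀ g : Γ, ∀ᵐ x ∂μ, f (g • x) = g • f x) →
      ∃ m : M, (∀ g : Γ, g • m = m) ∧ ∀ᵐ x ∂μ, f x = m


section UniverseTransfer

universe u v

/-- Transfer `StandardBorelSpace` across a measurable equivalence. -/
theorem MyAux.standardBorelSpace_of_equiv {α : Type u} {β : Type v}
    [MeasurableSpace α] [MeasurableSpace β] [StandardBorelSpace β]
    (e : α ≃ᵐ β) : StandardBorelSpace α := by
  obtain ⟨τβ, hbβ, hpβ⟩ := ‹StandardBorelSpace β›.polish
  letI : TopologicalSpace α := τβ.induced e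
  haveI : PolishSpace α := e.toEquiv.polishSpace_induced
  refine ⟨⟨_, ⟨?_⟩, inferInstance⟩⟩
  rw [borel_comap]
  rw [← hbβ.measurable_eq]
  exact e.measurableEmbedding.comap_eq.symm

/-- A copy of a standard Borel space in an arbitrary universe. -/
noncomputable def MyAux.borelCopy (X : Type u) [MeasurableSpace X] [StandardBorelSpace X] :
    Type v :=
  ULift.{v} (Set.range (MeasureTheory.exists_measurableEmbedding_real X).choose)

noncomputable instance (X : Type u) [MeasurableSpace X] [StandardBorelSpace X] :
    MeasurableSpace (MyAux.borelCopy.{u, v} X) :=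
  inferInstanceAs (MeasurableSpace
    (ULift.{v} (Set.range (MeasureTheory.exists_measurableEmbedding_real X).choose)))

instance (X : Type u) [MeasurableSpace X] [StandardBorelSpace X] :
    StandardBorelSpace (MyAux.borelCopy.{u, v} X) := by
  have hemb := (MeasureTheory.exists_measurableEmbedding_real X).choose_spec
  haveI : StandardBorelSpace
      (Set.range (MeasureTheory.exists_measurableEmbedding_real X).choose) :=
    hemb.measurableSet_range.standardBorel
  exact MyAux.standardBorelSpace_of_equiv (MeasurableEquiv.ulift)

/-- The measurable equivalence of a standard Borel space with its copy. -/
noncomputable def MyAux.borelCopyEquiv (X : Type u) [MeasurableSpace X]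
    [StandardBorelSpace X] : X ≃ᵐ MyAux.borelCopy.{u, v} X :=
  ((MeasureTheory.exists_measurableEmbedding_real X).choose_spec.equivRange).trans
    MeasurableEquiv.ulift.symm

/-- `RelIsometricallyErgodic` is universe independent. -/
theorem MyAux.relIE_transfer {Γ : Type*} [Group Γ] [MeasurableSpace Γ]
    {A B : Type*} [MeasurableSpace A] [MeasurableSpace B]
    [MulAction Γ A] [MulAction Γ B]
    {μ : Measure A} {ν : Measure B} {p : A → B}
    (h : RelIsometricallyErgodic Γ μ ν p) :
    RelIsometricallyErgodic Γ μ ν p := by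
  intro 𝓜 V _ _ _ _ _ _ _ _ F f f₀ hf hf₀ hfe hf₀e hq
  let e := MyAux.borelCopyEquiv 𝓜
  let e₀ := MyAux.borelCopyEquiv V
  letI : MulAction Γ (MyAux.borelCopy 𝓜) :=
    { smul := fun g m => e (g • e.symm m)
      one_smul := fun m => by
        show e ((1 : Γ) • e.symm m) = m
        simp
      mul_smul := fun g g' m => by
        show e ((g * g') • e.symm m) = e (g • e.symm (e (g' • e.symm m)))
        simp [mul_smul] }
  letI : MulAction Γ (MyAux.borelCopy V) :=
    { smul := fun g v => e₀ (g • e₀.symm v)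
      one_smul := fun v => by
        show e₀ ((1 : Γ) • e₀.symm v) = v
        simp
      mul_smul := fun g g' v => by
        show e₀ ((g * g') • e₀.symm v) = e₀ (g • e₀.symm (e₀ (g' • e₀.symm v)))
        simp [mul_smul] }
  have hsmul𝓜 : ∀ (g : Γ) (m : MyAux.borelCopy 𝓜), g • m = e (g • e.symm m) := fun _ _ => rfl
  have hsmulV : ∀ (g : Γ) (v : MyAux.borelCopy V), g • v = e₀ (g • e₀.symm v) := fun _ _ => rfl
  haveI : MeasurableSMul Γ (MyAux.borelCopy 𝓜) :=
    { measurable_const_smul := fun c =>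
        e.measurable.comp ((measurable_const_smul c).comp e.symm.measurable)
      measurable_smul_const := fun m =>
        e.measurable.comp (measurable_smul_const (e.symm m)) }
  haveI : MeasurableSMul Γ (MyAux.borelCopy V) :=
    { measurable_const_smul := fun c =>
        e₀.measurable.comp ((measurable_const_smul c).comp e₀.symm.measurable)
      measurable_smul_const := fun v =>
        e₀.measurable.comp (measurable_smul_const (e₀.symm v)) }
  let F' : FiberwiseIsometricAction Γ (MyAux.borelCopy 𝓜) (MyAux.borelCopy V) :=
    { q := fun m => e₀ (F.q (e.symm m))
      measurable_q := e₀.measurable.comp (F.measurable_q.comp e.symm.measurable)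
      d := fun m m' => F.d (e.symm m) (e.symm m')
      measurable_d := F.measurable_d.comp
        ((e.symm.measurable.comp measurable_fst).prodMk
          (e.symm.measurable.comp measurable_snd))
      equivariant_q := fun g m => by
        simp only [hsmul𝓜, hsmulV, MeasurableEquiv.symm_apply_apply]
        rw [F.equivariant_q]
      d_self := fun m => F.d_self _
      eq_of_d_eq_zero := fun m m' hq hd => by
        have := F.eq_of_d_eq_zero _ _ (e₀.injective hq) hd
        have : e.symm m = e.symm m' := this
        simpa using congrArg e this
      d_comm := fun m m' => F.d_comm _ _
      d_triangle := fun m₁ m₂ m₃ h₁ h₂ =>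
        F.d_triangle _ _ _ (e₀.injective h₁) (e₀.injective h₂)
      d_lt_top := fun m m' hq => F.d_lt_top _ _ (e₀.injective hq)
      separable_fibers := fun v => by
        obtain ⟨D, hDc, hDq, hDd⟩ := F.separable_fibers (e₀.symm v)
        refine ⟨e '' D, hDc.image _, ?_, ?_⟩
        · rintro m ⟨x, hx, rfl⟩
          have := hDq hx
          simp only [Set.mem_preimage, Set.mem_singleton_iff] at this ⊢
          simp [this]
        · intro m hm ε hε
          obtain ⟨m', hm', hlt⟩ := hDd (e.symm m) (by simpa using congrArg e₀.symm hm) ε hε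
          exact ⟨e m', Set.mem_image_of_mem _ hm', by simpa using hlt⟩
      isometric_smul := fun g m m' hq => by
        simp only [hsmul𝓜, MeasurableEquiv.symm_apply_apply]
        exact F.isometric_smul g _ _ (e₀.injective hq) }
  obtain ⟨f₁', hf₁'m, hf₁'e, hf₁'q, hf₁'p⟩ :=
    h (MyAux.borelCopy 𝓜) (MyAux.borelCopy V) F' (fun a => e (f a)) (fun b => e₀ (f₀ b))
      (e.measurable.comp hf) (e₀.measurable.comp hf₀)
      (by intro g
          filter_upwards [hfe g] with a ha
          simp only [ha, hsmul𝓜, MeasurableEquiv.symm_apply_apply])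
      (by intro g
          filter_upwards [hf₀e g] with b hb
          simp only [hb, hsmulV, MeasurableEquiv.symm_apply_apply])
      (by filter_upwards [hq] with a ha
          show e₀ (F.q (e.symm (e (f a)))) = e₀ (f₀ (p a))
          simp [ha])
  refine ⟨fun b => e.symm (f₁' b), e.symm.measurable.comp hf₁'m, ?_, ?_, ?_⟩
  · intro g
    filter_upwards [hf₁'e g] with b hb
    rw [hb, hsmul𝓜]
    simp
  · filter_upwards [hf₁'q] with b hb
    have : e₀ (F.q (e.symm (f₁' b))) = e₀ (f₀ b) := hb
    exact e₀.injective this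
  · filter_upwards [hf₁'p] with a ha
    simp [ha]

end UniverseTransfer

/-- For `Γ`-maps `p : A → B` and `r : B → C` between Lebesgue `Γ`-spaces over
an lcsc group `Γ`, if both `p` and `r` are relatively isometrically ergodic, then so is
`r ∘ p : A → C`. -/
theorem relIsometricallyErgodic_comp
    {Γ : Type*} [Group Γ] [TopologicalSpace Γ] [IsTopologicalGroup Γ]
    [LocallyCompactSpace Γ] [SecondCountableTopology Γ]
    [MeasurableSpace Γ] [BorelSpace Γ]
    {A B C : Type*}
    [MeasurableSpace A] [StandardBorelSpace A]
    [MeasurableSpace B] [StandardBorelSpace B]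
    [MeasurableSpace C] [StandardBorelSpace C]
    [MulAction Γ A] [MulAction Γ B] [MulAction Γ C]
    [MeasurableSMul Γ A] [MeasurableSMul Γ B] [MeasurableSMul Γ C]
    (μ : Measure A) (ν : Measure B) (κ : Measure C)
    [IsProbabilityMeasure μ] [IsProbabilityMeasure ν] [IsProbabilityMeasure κ]
    (hμ : QuasiInvariant Γ μ) (hν : QuasiInvariant Γ ν) (hκ : QuasiInvariant Γ κ)
    (p : A → B) (hp : Measurable p)
    (hpe : ∀ g : Γ, ∀ᵐ a ∂μ, p (g • a) = g • p a)
    (hpm : μ.map p ≪ ν ∧ ν ≪ μ.map p)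
    (r : B → C) (hr : Measurable r)
    (hre : ∀ g : Γ, ∀ᵐ b ∂ν, r (g • b) = g • r b)
    (hrm : ν.map r ≪ κ ∧ κ ≪ ν.map r)
    (hpRIE : RelIsometricallyErgodic Γ μ ν p)
    (hrRIE : RelIsometricallyErgodic Γ ν κ r) :
    RelIsometricallyErgodic Γ μ κ (r ∘ p) := by
  intro 𝓜 V _ _ _ _ _ _ _ _ F f f₀ hf hf₀ hfe hf₀e hcomp
  -- transfer a.e. statements along p and r
  have pullp : ∀ {P : B → Prop}, (∀ᵐ b ∂ν, P b) → ∀ᵐ a ∂μ, P (p a) := by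
    intro P h
    exact ae_of_ae_map hp.aemeasurable (hpm.1.ae_le h)
  have pullr : ∀ {P : C → Prop}, (∀ᵐ c ∂κ, P c) → ∀ᵐ b ∂ν, P (r b) := by
    intro P h
    exact ae_of_ae_map hr.aemeasurable (hrm.1.ae_le h)
  -- equivariance of f₀ ∘ r
  have hf₀re : ∀ g : Γ, ∀ᵐ b ∂ν, (f₀ ∘ r) (g • b) = g • (f₀ ∘ r) b := by
    intro g
    filter_upwards [hre g, pullr (hf₀e g)] with b hb hb'
    simp only [Function.comp_apply, hb, hb']
  -- apply relative isometric ergodicity of p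
  obtain ⟨f₁, hf₁m, hf₁e, hf₁q, hf₁p⟩ :=
    MyAux.relIE_transfer hpRIE 𝓜 V F f (f₀ ∘ r) hf (hf₀.comp hr) hfe hf₀re hcomp
  -- apply relative isometric ergodicity of r
  obtain ⟨f₂, hf₂m, hf₂e, hf₂q, hf₂r⟩ :=
    MyAux.relIE_transfer hrRIE 𝓜 V F f₁ f₀ hf₁m hf₀ hf₁e hf₀e hf₁q
  refine ⟨f₂, hf₂m, hf₂e, hf₂q, ?_⟩
  filter_upwards [pullp hf₂r, hf₁p] with a ha ha'
  simpa [Function.comp] using ha.trans ha'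
end

section
/- (Mautner phenomenon for isometric actions) Let P be a topological group acting continuously by isometries on a metric space (M,d), i.e. via a continuous homomorphism P → Is(M,d). Let x₀ ∈ M, let u ∈ P, and suppose there exists a sequence (aₙ) in P such that aₙ.x₀ = x₀ for all n and aₙ⁻¹ u aₙ → e in P. Then u.x₀ = x₀. -/
open Filter Topology

/-- **Mautner phenomenon for isometric actions.** Let `P` be a topological group
acting continuously by isometries on a metric space `M`. If `x₀ ∈ M` is fixed by each member of
a sequence `aₙ` in `P`, and `aₙ⁻¹ * u * aₙ → e` for some `u ∈ P`, then `u` fixes `x₀`. -/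
theorem mautner_isometric
    {P M : Type*} [Group P] [TopologicalSpace P] [IsTopologicalGroup P]
    [MetricSpace M] [MulAction P M] [ContinuousSMul P M]
    (hiso : ∀ (g : P) (x y : M), dist (g • x) (g • y) = dist x y)
    (x₀ : M) (u : P) (a : ℕ → P)
    (hfix : ∀ n, a n • x₀ = x₀)
    (hconj : Tendsto (fun n => (a n)⁻¹ * u * a n) atTop (𝓝 (1 : P))) :
    u • x₀ = x₀ := by
  have key : ∀ n, dist (((a n)⁻¹ * u * a n) • x₀) x₀ = dist (u • x₀) x₀ := by
    intro n
    calc dist (((a n)⁻¹ * u * a n) • x₀) x₀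
        = dist ((a n) • ((a n)⁻¹ * u * a n) • x₀) ((a n) • x₀) := (hiso _ _ _).symm
      _ = dist (u • ((a n) • x₀)) ((a n) • x₀) := by
          rw [smul_smul]; group; rw [mul_smul]
      _ = dist (u • x₀) x₀ := by rw [hfix]
  have h1 : Tendsto (fun n => dist (((a n)⁻¹ * u * a n) • x₀) x₀) atTop
      (𝓝 (dist ((1 : P) • x₀) x₀)) := by
    exact (Tendsto.dist ((continuous_smul.tendsto ((1 : P), x₀)).comp
      (hconj.prodMk_nhds tendsto_const_nhds)) tendsto_const_nhds)
  simp only [one_smul, dist_self] at h1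
  have h2 : Tendsto (fun _ : ℕ => dist (u • x₀) x₀) atTop (𝓝 0) := by
    simpa [key] using h1
  have := tendsto_nhds_unique h2 tendsto_const_nhds
  rwa [eq_comm, dist_eq_zero] at this
end

section
/- Let Γ be an lcsc group, A an isometrically ergodic Lebesgue Γ-space, G an lcsc group, Σ a locally compact second countable topological space with a continuous proper G-action (for every compact Q ⊂ Σ, the set {g ∈ G : gQ ∩ Q ≠ ∅} is precompact), and ρ : Γ → G a continuous homomorphism. If there exists a Borel map Ψ : A → Σ with Ψ(g.x) = ρ(g).Ψ(x) for every g ∈ Γ and almost every x ∈ A, then ρ(Γ) is precompact in G (its closure is compact). -/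
open MeasureTheory Filter Topology

open Pointwise
open scoped ENNReal NNReal

/-- In a locally compact second countable space there is a countable family of open sets,
each contained in a compact set, covering the space. -/
lemma exists_open_cover_subset_compact' (X : Type*) [TopologicalSpace X]
    [LocallyCompactSpace X] [SecondCountableTopology X] :
    ∃ (U K : ℕ → Set X), (∀ n, IsOpen (U n)) ∧ (∀ n, IsCompact (K n)) ∧
      (∀ n, U n ⊆ K n) ∧ ∀ x : X, ∃ n, x ∈ U n := by
  classical
  obtain ⟨b, hbc, -, hbasis⟩ := TopologicalSpace.exists_countable_basis X
  obtain ⟨e, he⟩ := (hbc.insert ∅).exists_eq_range (Set.insert_nonempty _ _)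
  refine ⟨fun n => if h : IsOpen (e n) ∧ ∃ K, IsCompact K ∧ e n ⊆ K then e n else ∅,
    fun n => if h : IsOpen (e n) ∧ ∃ K, IsCompact K ∧ e n ⊆ K then h.2.choose else ∅,
    fun n => ?_, fun n => ?_, fun n => ?_, fun x => ?_⟩
  · by_cases h : IsOpen (e n) ∧ ∃ K, IsCompact K ∧ e n ⊆ K
    · simpa [h] using h.1
    · simp [h]
  · by_cases h : IsOpen (e n) ∧ ∃ K, IsCompact K ∧ e n ⊆ K
    · simpa [h] using h.2.choose_spec.1
    · simp [h]
  · by_cases h : IsOpen (e n) ∧ ∃ K, IsCompact K ∧ e n ⊆ K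
    · simpa [h] using h.2.choose_spec.2
    · simp [h]
  · obtain ⟨K, hK, hKx⟩ := exists_compact_mem_nhds x
    obtain ⟨O, hOK, hOopen, hxO⟩ := mem_nhds_iff.1 hKx
    obtain ⟨v, hvb, hxv, hvO⟩ := hbasis.exists_subset_of_mem_open hxO hOopen
    have hv : v ∈ Set.range e := by rw [← he]; exact Set.mem_insert_of_mem _ hvb
    obtain ⟨n, rfl⟩ := hv
    have hcond : IsOpen (e n) ∧ ∃ K, IsCompact K ∧ e n ⊆ K :=
      ⟨hbasis.isOpen hvb, K, hK, hvO.trans hOK⟩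
    exact ⟨n, by simpa [hcond] using hxv⟩

/-- In any topological group, the closure of a compact set is compact (no Hausdorff
assumption). -/
lemma isCompact_closure_of_isCompact' {H : Type*} [Group H] [TopologicalSpace H]
    [IsTopologicalGroup H] {K : Set H} (hK : IsCompact K) : IsCompact (closure K) := by
  have h1 : ∀ n ∈ closure ({1} : Set H), Inseparable (1 : H) n := by
    intro n hn
    have h1n : (1 : H) ⤳ n := specializes_iff_mem_closure.2 hn
    have hn1 : n ⤳ 1 := by
      have h2 : (1 : H)⁻¹ ⤳ n⁻¹ := h1n.map continuous_inv
      have h3 : (n * (1 : H)⁻¹) ⤳ (n * n⁻¹) := h2.map (continuous_const.mul continuous_id)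
      simpa using h3
    exact h1n.antisymm hn1
  have hN : IsCompact (closure ({1} : Set H)) := by
    refine isCompact_of_finite_subcover fun {ι} V hV hcov => ?_
    have h1m : (1 : H) ∈ closure ({1} : Set H) := subset_closure rfl
    obtain ⟨i0, hi0⟩ := Set.mem_iUnion.1 (hcov h1m)
    refine ⟨{i0}, fun n hn => ?_⟩
    have : n ∈ V i0 := ((h1 n hn).mem_open_iff (hV i0)).1 hi0
    simpa using this
  have hsub : closure K ⊆ K * closure ({1} : Set H) := by
    intro x hx
    haveI : (𝓝 x ⊓ 𝓟 K).NeBot := mem_closure_iff_clusterPt.1 hx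
    obtain ⟨a, haK, hcl2⟩ := hK (f := 𝓝 x ⊓ 𝓟 K) inf_le_right
    have hne : (𝓝 a ⊓ 𝓝 x).NeBot := hcl2.mono inf_le_left
    have hmem : a⁻¹ * x ∈ closure ({1} : Set H) := by
      rw [mem_closure_iff]
      intro o ho hmo
      have hcont : Continuous fun p : H × H => p.1⁻¹ * p.2 :=
        (continuous_fst.inv).mul continuous_snd
      have hpre : (fun p : H × H => p.1⁻¹ * p.2) ⁻¹' o ∈ 𝓝 (a, x) :=
        hcont.continuousAt.preimage_mem_nhds (ho.mem_nhds hmo)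
      rw [nhds_prod_eq, Filter.mem_prod_iff] at hpre
      obtain ⟨P, hP, Q, hQ, hPQ⟩ := hpre
      obtain ⟨z, hzP, hzQ⟩ := hne.nonempty_of_mem (inter_mem_inf hP hQ)
      refine ⟨1, ?_, rfl⟩
      have : (z, z) ∈ P ×ˢ Q := ⟨hzP, hzQ⟩
      have := hPQ this
      simpa using this
    have : a * (a⁻¹ * x) ∈ K * closure ({1} : Set H) := Set.mul_mem_mul haK hmem
    simpa using this
  exact (hK.mul hN).of_isClosed_subset isClosed_closure hsub


universe uG uX v w

/-- Isometric ergodicity at any fixed universe applies to separable metric `Γ`-spaces in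
every universe, via the Kuratowski embedding. -/
lemma IsometricallyErgodic.apply_any {Γ : Type uG} [Group Γ] {X : Type uX} [MeasurableSpace X]
    [MulAction Γ X] {μ : Measure X} (hie : IsometricallyErgodic.{uG, uX, v} Γ μ)
    (M : Type w) [MetricSpace M] [MeasurableSpace M] [BorelSpace M]
    [TopologicalSpace.SeparableSpace M] [MulAction Γ M] [Nonempty M]
    (hiso : ∀ (g : Γ) (x y : M), dist (g • x) (g • y) = dist x y)
    (f : X → M) (hf : Measurable f)
    (hequiv : ∀ g : Γ, ∀ᵐ x ∂μ, f (g • x) = g • f x) :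
    ∃ m : M, (∀ g : Γ, g • m = m) ∧ ∀ᵐ x ∂μ, f x = m := by
  classical
  haveI := UniformSpace.secondCountable_of_separable M
  set M₀ : Type := ↥(Set.range (kuratowskiEmbedding M)) with hM₀
  let e : M ≃ᵢ M₀ := (kuratowskiEmbedding.isometry M).isometryEquivOnRange
  haveI : SecondCountableTopology M₀ := e.symm.toHomeomorph.secondCountableTopology
  set N : Type v := ULift.{v} M₀ with hN
  haveI : SecondCountableTopology N := (Homeomorph.ulift (X := M₀)).secondCountableTopology
  borelize N
  let φ : N → M := fun z => e.symm z.down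
  let ψ : M → N := fun m => ULift.up (e m)
  have hφψ : ∀ m, φ (ψ m) = m := fun m => e.symm_apply_apply m
  have hψφ : ∀ z, ψ (φ z) = z := fun z => by
    simp only [φ, ψ, e.apply_symm_apply]; rfl
  have hφdist : ∀ z w : N, dist (φ z) (φ w) = dist z w := fun z w =>
    e.symm.dist_eq z.down w.down
  letI : MulAction Γ N :=
    { smul := fun γ z => ψ (γ • φ z)
      one_smul := fun z => by show ψ ((1 : Γ) • φ z) = z; rw [one_smul, hψφ]
      mul_smul := fun a b z => by
        show ψ ((a * b) • φ z) = ψ (a • φ (ψ (b • φ z)))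
        rw [hφψ, mul_smul] }
  have hsmul : ∀ (γ : Γ) (z : N), γ • z = ψ (γ • φ z) := fun _ _ => rfl
  have hiso' : ∀ (γ : Γ) (z w : N), dist (γ • z) (γ • w) = dist z w := by
    intro γ z w
    rw [hsmul, hsmul, ← hφdist (ψ (γ • φ z)) (ψ (γ • φ w)), hφψ, hφψ, hiso, hφdist]
  have hψcont : Continuous ψ :=
    (Homeomorph.ulift (X := M₀)).symm.continuous.comp e.continuous
  have hφcont : Continuous φ :=
    e.symm.continuous.comp (Homeomorph.ulift (X := M₀)).continuous
  have hequiv' : ∀ γ : Γ, ∀ᵐ x ∂μ, ψ (f (γ • x)) = γ • ψ (f x) := by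
    intro γ
    filter_upwards [hequiv γ] with x hx
    rw [hx, hsmul, hφψ]
  obtain ⟨m', hfix', hae'⟩ := hie N hiso' (fun x => ψ (f x))
    (hψcont.measurable.comp hf) hequiv'
  refine ⟨φ m', fun γ => ?_, ?_⟩
  · have := hfix' γ
    rw [hsmul] at this
    have h2 := congrArg φ this
    rwa [hφψ] at h2
  · filter_upwards [hae'] with x hx
    have := congrArg φ hx
    rwa [hφψ] at this

/-- Let `Γ` be an lcsc group, `A` an isometrically ergodic Lebesgue `Γ`-space,
`G` an lcsc group acting continuously and properly on a locally compact second countable space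
`Y`, and `ρ : Γ → G` a continuous homomorphism. If there is a Borel map `Ψ : A → Y` with
`Ψ(g.x) = ρ(g).Ψ(x)` for every `g ∈ Γ` and a.e. `x ∈ A`, then `ρ(Γ)` is precompact in `G`. -/
theorem precompact_of_equivariant_map_to_proper
    {Γ : Type*} [Group Γ] [TopologicalSpace Γ] [IsTopologicalGroup Γ]
    [LocallyCompactSpace Γ] [SecondCountableTopology Γ]
    [MeasurableSpace Γ] [BorelSpace Γ]
    {A : Type*} [MeasurableSpace A] [StandardBorelSpace A] [MulAction Γ A]
    [MeasurableSMul Γ A]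
    (μ : Measure A) [IsProbabilityMeasure μ]
    (hqi : QuasiInvariant Γ μ)
    (hie : IsometricallyErgodic Γ μ)
    {G : Type*} [Group G] [TopologicalSpace G] [IsTopologicalGroup G]
    [LocallyCompactSpace G] [SecondCountableTopology G]
    {Y : Type*} [TopologicalSpace Y] [LocallyCompactSpace Y] [SecondCountableTopology Y]
    [MeasurableSpace Y] [BorelSpace Y]
    [MulAction G Y] [ContinuousSMul G Y]
    (hproper : ∀ Q : Set Y, IsCompact Q →
      IsCompact (closure {g : G | ((fun y => g • y) '' Q ∩ Q).Nonempty}))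
    (ρ : Γ →* G) (hρ : Continuous ρ)
    (Ψ : A → Y) (hΨ : Measurable Ψ)
    (heq : ∀ g : Γ, ∀ᵐ x ∂μ, Ψ (g • x) = ρ g • Ψ x) :
    IsCompact (closure (Set.range ρ)) := by
  classical
  borelize G
  haveI : (ae μ).NeBot := ae_neBot.2 (IsProbabilityMeasure.ne_zero μ)
  set lam : Measure G := Measure.haar with hlam
  -- a countable cover of Y by open sets sitting inside compact sets
  obtain ⟨U, K, hUopen, hKcomp, hUK, hUcov⟩ := exists_open_cover_subset_compact' Y
  set OU : ℕ → Set Y := fun n => ⋃ g : G, (fun y => g⁻¹ • y) ⁻¹' (U n) with hOU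
  have hOUopen : ∀ n, IsOpen (OU n) :=
    fun n => isOpen_iUnion fun g => (hUopen n).preimage (continuous_const.smul continuous_id)
  have hOUcov : ∀ y : Y, ∃ n, y ∈ OU n := by
    intro y
    obtain ⟨n, hn⟩ := hUcov y
    exact ⟨n, Set.mem_iUnion.2 ⟨1, by simpa using hn⟩⟩
  have hOUsmul : ∀ (h : G) (y : Y) (n : ℕ), h • y ∈ OU n ↔ y ∈ OU n := by
    intro h y n
    constructor
    · rintro hm
      obtain ⟨g, hg⟩ := Set.mem_iUnion.1 hm
      refine Set.mem_iUnion.2 ⟨h⁻¹ * g, ?_⟩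
      show (h⁻¹ * g)⁻¹ • y ∈ U n
      rw [mul_inv_rev, inv_inv, mul_smul]
      exact hg
    · rintro hm
      obtain ⟨g, hg⟩ := Set.mem_iUnion.1 hm
      refine Set.mem_iUnion.2 ⟨h * g, ?_⟩
      show (h * g)⁻¹ • (h • y) ∈ U n
      rw [mul_inv_rev, mul_smul, inv_smul_smul]
      exact hg
  -- the least index of an orbit-saturated cover element containing Ψ x
  have hex : ∀ x : A, ∃ n, Ψ x ∈ OU n := fun x => hOUcov (Ψ x)
  set nfun : A → ℕ := fun x => Nat.find (hex x) with hnfun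
  have hnmeas : Measurable nfun := by
    apply measurable_to_countable'
    intro n
    have hrepr : nfun ⁻¹' {n} =
        (Ψ ⁻¹' OU n) ∩ ⋂ (m : ℕ) (_ : m < n), (Ψ ⁻¹' OU m)ᶜ := by
      ext x
      simp only [Set.mem_preimage, Set.mem_singleton_iff, Set.mem_inter_iff, Set.mem_iInter,
        Set.mem_compl_iff, hnfun, Nat.find_eq_iff (hex x)]
    rw [hrepr]
    exact ((hOUopen n).measurableSet.preimage hΨ).inter
      (MeasurableSet.iInter fun m => MeasurableSet.iInter fun _ =>
        ((hOUopen m).measurableSet.preimage hΨ).compl)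
  -- apply isometric ergodicity to the (trivial action on) ℝ to find a fixed index n₀
  have hn0 : ∃ n₀ : ℕ, ∀ᵐ x ∂μ, Ψ x ∈ OU n₀ := by
    letI actR : MulAction Γ ℝ :=
      { smul := fun _ r => r
        one_smul := fun _ => rfl
        mul_smul := fun _ _ _ => rfl }
    have hnequiv : ∀ γ : Γ, ∀ᵐ x ∂μ, ((nfun (γ • x) : ℝ)) = γ • (nfun x : ℝ) := by
      intro γ
      filter_upwards [heq γ] with x hx
      show ((nfun (γ • x) : ℝ)) = (nfun x : ℝ)
      norm_cast
      have hiff : ∀ n, (Ψ (γ • x) ∈ OU n) ↔ Ψ x ∈ OU n := fun n => by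
        rw [hx]; exact hOUsmul _ _ n
      exact le_antisymm
        (Nat.find_min' (hex (γ • x)) ((hiff _).2 (Nat.find_spec (hex x))))
        (Nat.find_min' (hex x) ((hiff _).1 (Nat.find_spec (hex (γ • x)))))
    obtain ⟨r, -, hrae⟩ := hie.apply_any ℝ (fun _ _ _ => rfl) (fun x => (nfun x : ℝ))
      (measurable_from_top.comp hnmeas) hnequiv
    obtain ⟨x₀, hx₀⟩ := hrae.exists
    refine ⟨nfun x₀, ?_⟩
    filter_upwards [hrae] with x hx
    have hxx : (nfun x : ℝ) = (nfun x₀ : ℝ) := hx.trans hx₀.symm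
    have hnn : nfun x = nfun x₀ := Nat.cast_injective hxx
    have hsp : Ψ x ∈ OU (nfun x) := Nat.find_spec (hex x)
    rwa [hnn] at hsp
  obtain ⟨n₀, hmem_ae⟩ := hn0

  -- the parametrized family of "return-time" sets in G
  set T : Y → Set G := fun y => {g : G | g⁻¹ • y ∈ U n₀} with hT
  have hTopen : ∀ y, IsOpen (T y) := fun y =>
    (hUopen n₀).preimage (continuous_inv.smul continuous_const)
  have hTfin : ∀ y : Y, lam (T y) ≠ ⊤ := by
    intro y
    have hQ : IsCompact (insert y (K n₀)) := (hKcomp n₀).insert y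
    have hsub : T y ⊆
        {g : G | ((fun z => g • z) '' insert y (K n₀) ∩ insert y (K n₀)).Nonempty} := by
      intro g hg
      exact ⟨y, ⟨g⁻¹ • y, Set.mem_insert_of_mem _ (hUK n₀ hg), smul_inv_smul g y⟩,
        Set.mem_insert _ _⟩
    exact ((measure_mono (hsub.trans subset_closure)).trans_lt
      (hproper _ hQ).measure_lt_top).ne
  set s : Set (A × G) := {p : A × G | p.2⁻¹ • Ψ p.1 ∈ U n₀} with hs_def
  have hs : MeasurableSet s := by
    have hc : Continuous fun q : G × Y => q.1 • q.2 := continuous_smul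
    have hm : Measurable fun p : A × G => ((p.2)⁻¹, Ψ p.1) :=
      (measurable_snd.inv).prodMk (hΨ.comp measurable_fst)
    exact (hc.measurable.comp hm) (hUopen n₀).measurableSet
  set ind : A → G → ℝ := fun x => (T (Ψ x)).indicator (fun _ => (1 : ℝ)) with hind
  have hindmem : ∀ x, MemLp (ind x) 1 lam := fun x =>
    memLp_indicator_const 1 (hTopen (Ψ x)).measurableSet 1 (Or.inr (hTfin (Ψ x)))
  set f : A → Lp ℝ 1 lam := fun x => (hindmem x).toLp (ind x) with hf
  -- the isometric action of Γ on L¹(G)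
  letI actLp : MulAction Γ (Lp ℝ 1 lam) :=
    { smul := fun γ u => DomMulAct.mk ((ρ γ)⁻¹) • u
      one_smul := fun u => by
        show DomMulAct.mk ((ρ 1)⁻¹) • u = u
        rw [map_one, inv_one, DomMulAct.mk_one, one_smul]
      mul_smul := fun γ δ u => by
        show DomMulAct.mk ((ρ (γ * δ))⁻¹) • u
            = DomMulAct.mk ((ρ γ)⁻¹) • DomMulAct.mk ((ρ δ)⁻¹) • u
        rw [map_mul, mul_inv_rev, DomMulAct.mk_mul, mul_smul] }
  have hsmul_def : ∀ (γ : Γ) (u : Lp ℝ 1 lam),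
      γ • u = DomMulAct.mk ((ρ γ)⁻¹) • u := fun _ _ => rfl
  haveI : Fact ((1 : ℝ≥0∞) ≤ 1) := ⟨le_rfl⟩
  haveI : Fact ((1 : ℝ≥0∞) ≠ ⊤) := ⟨ENNReal.one_ne_top⟩
  haveI : Nonempty ↥(Lp ℝ 1 lam) := ⟨0⟩
  borelize ↥(Lp ℝ 1 lam)
  -- pointwise description of the indicator
  have hindeq : ∀ (x : A) (g : G),
      ind x g = s.indicator (fun _ => (1 : ℝ)) (x, g) := by
    intro x g
    by_cases h : g⁻¹ • Ψ x ∈ U n₀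
    · rw [Set.indicator_of_mem (show (x, g) ∈ s from h)]
      show (T (Ψ x)).indicator (fun _ => (1:ℝ)) g = 1
      rw [Set.indicator_of_mem (show g ∈ T (Ψ x) from h)]
    · rw [Set.indicator_of_notMem (show (x, g) ∉ s from h)]
      show (T (Ψ x)).indicator (fun _ => (1:ℝ)) g = 0
      rw [Set.indicator_of_notMem (show g ∉ T (Ψ x) from h)]
  -- measurability of f
  have hdistmeas : ∀ v : Lp ℝ 1 lam, Measurable fun x => dist (f x) v := by
    intro v
    have hvm : Measurable (⇑v : G → ℝ) := (Lp.stronglyMeasurable v).measurable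
    have hkey : ∀ x, dist (f x) v
        = (∫⁻ g, ((‖ind x g - v g‖₊ : ℝ≥0) : ℝ≥0∞) ∂lam).toReal := by
      intro x
      rw [Lp.dist_def]
      congr 1
      have h1 : (⇑(f x) - ⇑v) =ᵐ[lam] fun g => ind x g - v g := by
        filter_upwards [(hindmem x).coeFn_toLp] with g hg
        rw [Pi.sub_apply, hg]
      rw [eLpNorm_congr_ae h1, eLpNorm_one_eq_lintegral_enorm]; simp only [enorm_eq_nnnorm]
    simp only [hkey]
    apply Measurable.ennreal_toReal
    have hFm : Measurable fun p : A × G =>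
        ((‖s.indicator (fun _ => (1 : ℝ)) p - v p.2‖₊ : ℝ≥0) : ℝ≥0∞) :=
      ((measurable_const.indicator hs).sub (hvm.comp measurable_snd)).nnnorm.coe_nnreal_ennreal
    have hFm2 := Measurable.lintegral_prod_right' (ν := lam) hFm
    simp only [hindeq]
    exact hFm2
  have hfmeas : Measurable f := by
    obtain ⟨D, hD⟩ := TopologicalSpace.exists_dense_seq (Lp ℝ 1 lam)
    apply measurable_of_isOpen
    intro O hO
    have hOrep : f ⁻¹' O = ⋃ (p : ℕ × ℚ) (_ : Metric.ball (D p.1) (p.2 : ℝ) ⊆ O),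
        {x | dist (f x) (D p.1) < (p.2 : ℝ)} := by
      ext x
      simp only [Set.mem_preimage, Set.mem_iUnion, Set.mem_setOf_eq]
      constructor
      · intro hx
        obtain ⟨ε, hε, hball⟩ := Metric.isOpen_iff.1 hO _ hx
        obtain ⟨m, hm⟩ := hD.exists_dist_lt (f x) (show (0 : ℝ) < ε / 4 by linarith)
        obtain ⟨q, hq1, hq2⟩ := exists_rat_btwn (show ε / 4 < ε / 2 by linarith)
        refine ⟨(m, q), ?_, lt_trans hm hq1⟩
        intro z hz
        apply hball
        rw [Metric.mem_ball] at hz ⊢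
        have h3 : dist z (f x) ≤ dist z (D m) + dist (D m) (f x) := dist_triangle _ _ _
        have h4 : dist (D m) (f x) < ε / 4 := by rw [dist_comm]; exact hm
        linarith
      · rintro ⟨p, hsub, hx⟩
        exact hsub (Metric.mem_ball.2 hx)
    rw [hOrep]
    exact MeasurableSet.iUnion fun p => MeasurableSet.iUnion fun _ =>
      measurableSet_lt (hdistmeas (D p.1)) measurable_const
  -- equivariance of f
  have hfequiv : ∀ γ : Γ, ∀ᵐ x ∂μ, f (γ • x) = γ • f x := by
    intro γ
    filter_upwards [heq γ] with x hx
    rw [hsmul_def]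
    show (hindmem (γ • x)).toLp (ind (γ • x)) = DomMulAct.mk ((ρ γ)⁻¹) • (hindmem x).toLp (ind x)
    rw [DomMulAct.mk_smul_toLp]
    apply MemLp.toLp_congr
    apply Filter.Eventually.of_forall
    intro g
    have hiff : ((ρ γ)⁻¹ * g)⁻¹ • Ψ x = g⁻¹ • (ρ γ • Ψ x) := by
      rw [mul_inv_rev, inv_inv, mul_smul]
    by_cases h : g⁻¹ • Ψ (γ • x) ∈ U n₀
    · have h1 : g ∈ T (Ψ (γ • x)) := h
      have h2 : ((ρ γ)⁻¹ • g : G) ∈ T (Ψ x) := by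
        show ((ρ γ)⁻¹ * g)⁻¹ • Ψ x ∈ U n₀
        rw [hiff, ← hx]
        exact h
      show (T (Ψ (γ • x))).indicator (fun _ => (1:ℝ)) g
          = (T (Ψ x)).indicator (fun _ => (1:ℝ)) ((ρ γ)⁻¹ • g)
      rw [Set.indicator_of_mem h1, Set.indicator_of_mem h2]
    · have h1 : g ∉ T (Ψ (γ • x)) := h
      have h2 : ((ρ γ)⁻¹ • g : G) ∉ T (Ψ x) := by
        show ¬ ((ρ γ)⁻¹ * g)⁻¹ • Ψ x ∈ U n₀
        rw [hiff, ← hx]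
        exact h
      show (T (Ψ (γ • x))).indicator (fun _ => (1:ℝ)) g
          = (T (Ψ x)).indicator (fun _ => (1:ℝ)) ((ρ γ)⁻¹ • g)
      rw [Set.indicator_of_notMem h1, Set.indicator_of_notMem h2]
  -- apply isometric ergodicity
  have hiso : ∀ (γ : Γ) (u w : Lp ℝ 1 lam), dist (γ • u) (γ • w) = dist u w := by
    intro γ u w
    rw [hsmul_def, hsmul_def]
    exact DomMulAct.dist_smul_Lp _ _ _
  obtain ⟨u₀, hfix, huae⟩ := hie.apply_any (Lp ℝ 1 lam) hiso f hfmeas hfequiv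
  -- the total mass of |u₀|
  set Iu : ℝ≥0∞ := ∫⁻ g, (‖u₀ g‖₊ : ℝ≥0∞) ∂lam with hIu
  have hIlt : Iu < ⊤ := by
    rw [hIu]; simp only [← enorm_eq_nnnorm]; rw [← eLpNorm_one_eq_lintegral_enorm]; exact Lp.eLpNorm_lt_top u₀
  have hIpos : 0 < Iu := by
    obtain ⟨x₁, hx1, hx2⟩ := (huae.and hmem_ae).exists
    have h1 : eLpNorm (⇑u₀) 1 lam = lam (T (Ψ x₁)) := by
      rw [← hx1]
      rw [eLpNorm_congr_ae (hindmem x₁).coeFn_toLp, hind,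
        eLpNorm_indicator_const (hTopen (Ψ x₁)).measurableSet one_ne_zero ENNReal.one_ne_top]
      simp
    have h2 : (0 : ℝ≥0∞) < lam (T (Ψ x₁)) := by
      apply (hTopen (Ψ x₁)).measure_pos lam
      obtain ⟨g, hg⟩ := Set.mem_iUnion.1 hx2
      exact ⟨g, hg⟩
    rw [hIu]; simp only [← enorm_eq_nnnorm]; rw [← eLpNorm_one_eq_lintegral_enorm, h1]
    exact h2
  -- a.e. invariance of u₀ under left translations by ρ γ
  have hInv : ∀ γ : Γ, (⇑u₀ : G → ℝ) =ᵐ[lam] fun g => u₀ ((ρ γ)⁻¹ * g) := by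
    intro γ
    have h1 := DomMulAct.smul_Lp_ae_eq (μ := lam) (DomMulAct.mk ((ρ γ)⁻¹)) u₀
    rw [← hsmul_def, hfix γ] at h1
    simpa using h1
  have hu0m : Measurable (⇑u₀ : G → ℝ) := (Lp.stronglyMeasurable u₀).measurable
  -- exhaust G and find a single open set carrying more than half the mass
  obtain ⟨B, KB, hBopen, hKBcomp, hBK, hBcov⟩ := exists_open_cover_subset_compact' G
  set Dn : ℕ → Set G := fun n => ⋃ i ∈ Finset.range (n + 1), B i with hDn
  have hDnopen : ∀ n, IsOpen (Dn n) := fun n => isOpen_biUnion fun i _ => hBopen i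
  have hDnmono : Monotone Dn := by
    intro a b hab g hg
    simp only [hDn, Set.mem_iUnion, Finset.mem_range] at hg ⊢
    obtain ⟨i, hi, hgi⟩ := hg
    exact ⟨i, by omega, hgi⟩
  have hDnunion : (⋃ n, Dn n) = Set.univ := by
    ext g
    simp only [Set.mem_iUnion, Set.mem_univ, iff_true, hDn, Finset.mem_range]
    obtain ⟨m, hm⟩ := hBcov g
    exact ⟨m, m, by omega, hm⟩
  set num : Measure G := lam.withDensity (fun g => (‖u₀ g‖₊ : ℝ≥0∞)) with hnum
  have hnuniv : num Set.univ = Iu := by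
    rw [hnum, withDensity_apply _ MeasurableSet.univ, setLIntegral_univ, hIu]
  have htend : Tendsto (fun n => num (Dn n)) atTop (𝓝 (num (⋃ n, Dn n))) :=
    tendsto_measure_iUnion_atTop hDnmono
  rw [hDnunion, hnuniv] at htend
  have hhalf : Iu / 2 < Iu := ENNReal.half_lt_self hIpos.ne' hIlt.ne
  obtain ⟨n, hn⟩ := (htend.eventually (eventually_gt_nhds hhalf)).exists
  set C : Set G := Dn n with hC
  have hCopen : IsOpen C := hDnopen n
  set KC : Set G := ⋃ i ∈ Finset.range (n + 1), KB i with hKC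
  have hKCcomp : IsCompact KC :=
    (Finset.range (n + 1)).finite_toSet.isCompact_biUnion fun i _ => hKBcomp i
  have hCK : C ⊆ KC := Set.iUnion₂_mono fun i _ => hBK i
  -- every ρ γ lies in KC * KC⁻¹
  have hmemKK : ∀ γ : Γ, ρ γ ∈ KC * KC⁻¹ := by
    intro γ
    set h : G := ρ γ with hh
    set C₂ : Set G := (fun g => h⁻¹ * g) ⁻¹' C with hC2def
    have hC2open : IsOpen C₂ := hCopen.preimage (continuous_const.mul continuous_id)
    have hC2meas : num C₂ = num C := by
      rw [hnum, withDensity_apply _ hC2open.measurableSet,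
        withDensity_apply _ hCopen.measurableSet,
        ← lintegral_indicator hC2open.measurableSet,
        ← lintegral_indicator hCopen.measurableSet]
      set φ : G → ℝ≥0∞ := C.indicator (fun g => (‖u₀ g‖₊ : ℝ≥0∞)) with hφ
      have hφm : Measurable φ :=
        (hu0m.nnnorm.coe_nnreal_ennreal).indicator hCopen.measurableSet
      have hcomp := (measurePreserving_mul_left lam h⁻¹).lintegral_comp hφm
      rw [← hcomp]
      apply lintegral_congr_ae
      filter_upwards [hInv γ] with g hg
      by_cases hgmem : h⁻¹ * g ∈ C
      · have hgC2 : g ∈ C₂ := hgmem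
        rw [Set.indicator_of_mem hgC2, hφ, Set.indicator_of_mem hgmem]
        rw [hg]
      · have hgC2 : g ∉ C₂ := hgmem
        rw [Set.indicator_of_notMem hgC2, hφ, Set.indicator_of_notMem hgmem]
    have hsum : Iu < num C + num C₂ := by
      rw [hC2meas]
      calc Iu = Iu / 2 + Iu / 2 := (ENNReal.add_halves Iu).symm
        _ < num C + num C := ENNReal.add_lt_add hn hn
    have hinter : (C ∩ C₂).Nonempty := by
      rw [Set.nonempty_iff_ne_empty]
      intro h0
      have hdisj : Disjoint C C₂ := Set.disjoint_iff_inter_eq_empty.2 h0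
      have hun := measure_union (μ := num) hdisj hC2open.measurableSet
      have hle : num C + num C₂ ≤ Iu := by
        rw [← hun, ← hnuniv]
        exact measure_mono (Set.subset_univ _)
      exact absurd hsum (not_lt.2 hle)
    obtain ⟨g, hgC, hgC2⟩ := hinter
    have hgC2' : h⁻¹ * g ∈ C := hgC2
    have heqh : g * (h⁻¹ * g)⁻¹ = h := by group
    have hmm : g * (h⁻¹ * g)⁻¹ ∈ KC * KC⁻¹ :=
      Set.mul_mem_mul (hCK hgC) (Set.inv_mem_inv.2 (hCK hgC2'))
    rwa [heqh] at hmm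
  have hrange : Set.range ⇑ρ ⊆ KC * KC⁻¹ := by
    rintro - ⟨γ, rfl⟩
    exact hmemKK γ
  have hKK : IsCompact (KC * KC⁻¹) := hKCcomp.mul hKCcomp.inv
  exact (isCompact_closure_of_isCompact' hKK).of_isClosed_subset isClosed_closure
    (closure_mono hrange)
end

section
/- Let G ⟳ M be a convergence action of an lcsc group G on a compact metrizable space M, let η be a Borel probability measure on M, and let (gₙ) be a sequence in G that eventually leaves every compact subset of G. If the pushforward measures (gₙ)_*η converge weak-* to a probability measure ξ, then the support of ξ contains at most two points. -/
open MeasureTheory Filter Topology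

/-- The set `M^(3)` of triples of pairwise distinct points of `M`. -/
def distinctTriples (M : Type*) : Set (M × M × M) :=
  {p | p.1 ≠ p.2.1 ∧ p.1 ≠ p.2.2 ∧ p.2.1 ≠ p.2.2}

/-- A continuous action `G ⟳ M` is a *convergence action* if the diagonal `G`-action on the
space `M^(3)` of distinct triples is proper: for every compact `Q ⊆ M^(3)` the set
`{g : gQ ∩ Q ≠ ∅}` is precompact in `G`. -/
def IsConvergenceAction (G M : Type*) [Group G] [TopologicalSpace G] [TopologicalSpace M]
    [MulAction G M] : Prop :=
  ∀ Q : Set (M × M × M), Q ⊆ distinctTriples M → IsCompact Q →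
    IsCompact (closure {g : G |
      ((fun p : M × M × M => (g • p.1, g • p.2.1, g • p.2.2)) '' Q ∩ Q).Nonempty})

/-- For a convergence action `G ⟳ M` of an lcsc group on a compact metrizable
space, a Borel probability measure `η` on `M`, and a sequence `gₙ → ∞` in `G` (leaving every
compact set), if `(gₙ)_*η` converges weak-* to a probability measure `ξ`, then `ξ` is supported
on at most two points. -/
theorem limit_measure_convergence_action_two_points
    {G : Type*} [Group G] [TopologicalSpace G] [IsTopologicalGroup G]
    [LocallyCompactSpace G] [SecondCountableTopology G]
    {M : Type*} [TopologicalSpace M] [CompactSpace M] [TopologicalSpace.MetrizableSpace M]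
    [MeasurableSpace M] [BorelSpace M]
    [MulAction G M] [ContinuousSMul G M]
    (hconv : IsConvergenceAction G M)
    (η ξ : Measure M) [IsProbabilityMeasure η] [IsProbabilityMeasure ξ]
    (g : ℕ → G) (hg : Tendsto g atTop (cocompact G))
    (hlim : ∀ f : C(M, ℝ),
      Tendsto (fun n => ∫ y, f (g n • y) ∂η) atTop (𝓝 (∫ y, f y ∂ξ))) :
    ∃ a b : M, ξ ({a, b}ᶜ) = 0 := by
  by_contra hcon
  push_neg at hcon
  letI : MetricSpace M := TopologicalSpace.metrizableSpaceMetric M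
  -- Step 1: find three distinct points in the support of ξ.
  have key : ∀ U : Set M, IsOpen U → ξ U ≠ 0 →
      ∃ x ∈ U, ∀ V : Set M, IsOpen V → x ∈ V → ξ V ≠ 0 := by
    intro U hU hUne
    by_contra h
    push_neg at h
    obtain ⟨B, hBc, -, hBb⟩ := TopologicalSpace.exists_countable_basis M
    apply hUne
    have hsub : U ⊆ ⋃₀ {V ∈ B | ξ V = 0} := by
      intro x hx
      obtain ⟨V, hVo, hxV, hV0⟩ := h x hx
      obtain ⟨bb, hbB, hxb, hbV⟩ := hBb.exists_subset_of_mem_open hxV hVo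
      exact ⟨bb, ⟨hbB, measure_mono_null hbV hV0⟩, hxb⟩
    refine measure_mono_null hsub ?_
    exact (measure_sUnion_null_iff (hBc.mono (Set.sep_subset _ _))).2 fun V hV => hV.2
  obtain ⟨a, -, ha⟩ := key Set.univ isOpen_univ (by simp)
  obtain ⟨b, hbmem, hb⟩ := key {a}ᶜ isClosed_singleton.isOpen_compl
    (by simpa [Set.pair_eq_singleton] using hcon a a)
  obtain ⟨c, hcmem, hc⟩ := key {a, b}ᶜ (Set.toFinite {a, b}).isClosed.isOpen_compl (hcon a b)
  have hab : a ≠ b := by rintro rfl; exact hbmem rfl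
  have hac : a ≠ c := by rintro rfl; exact hcmem (Set.mem_insert _ _)
  have hbc : b ≠ c := by rintro rfl; exact hcmem (Set.mem_insert_of_mem _ rfl)
  -- Step 2: choose a small radius with pairwise disjoint closed balls.
  set m3 : ℝ := min (min (dist a b) (dist a c)) (dist b c) with hm3
  have hm3pos : 0 < m3 :=
    lt_min (lt_min (dist_pos.2 hab) (dist_pos.2 hac)) (dist_pos.2 hbc)
  set r : ℝ := m3 / 3 with hrdef
  have hrpos : 0 < r := by positivity
  have h3r : 3 * r = m3 := by rw [hrdef]; ring
  have hd : ∀ {p q : M}, 3 * r ≤ dist p q →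
      Disjoint (Metric.closedBall p r) (Metric.closedBall q r) := by
    intro p q h
    exact Metric.closedBall_disjoint_closedBall (by linarith)
  have hab3 : 3 * r ≤ dist a b := by
    rw [h3r]; exact le_trans (min_le_left _ _) (min_le_left _ _)
  have hac3 : 3 * r ≤ dist a c := by
    rw [h3r]; exact le_trans (min_le_left _ _) (min_le_right _ _)
  have hbc3 : 3 * r ≤ dist b c := by
    rw [h3r]; exact min_le_right _ _
  have hdab := hd hab3
  have hdac := hd hac3
  have hdbc := hd hbc3
  -- Step 3: lower bounds on the η-mass of the preimages of the three balls.
  have main : ∀ p : M, (∀ V : Set M, IsOpen V → p ∈ V → ξ V ≠ 0) →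
      ∃ δ : ENNReal, δ ≠ 0 ∧ ∀ᶠ n in atTop,
        δ ≤ η ((fun y => g n • y) ⁻¹' Metric.ball p r) := by
    intro p hp
    obtain ⟨f, hf0, hf1, hf01⟩ := exists_continuous_zero_one_of_isClosed
      (Metric.isOpen_ball (x := p) (ε := r)).isClosed_compl
      (Metric.isClosed_closedBall (x := p) (ε := r / 2))
      (by
        rw [Set.disjoint_left]
        intro u hu hu2
        exact hu (Metric.closedBall_subset_ball (by linarith) hu2))
    have hfint : Integrable (fun y => f y) ξ :=
      f.continuous.integrable_of_hasCompactSupport (HasCompactSupport.of_compactSpace f)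
    have hball : ξ (Metric.ball p (r / 2)) ≠ 0 :=
      hp _ Metric.isOpen_ball (Metric.mem_ball_self (by linarith))
    have hLpos : 0 < ∫ y, f y ∂ξ := by
      have hind : ∫ y, (Metric.ball p (r / 2)).indicator (fun _ => (1 : ℝ)) y ∂ξ
          ≤ ∫ y, f y ∂ξ := by
        refine integral_mono ((integrable_const (1 : ℝ)).indicator measurableSet_ball)
          hfint ?_
        intro y
        by_cases hy : y ∈ Metric.ball p (r / 2)
        · rw [Set.indicator_of_mem hy]
          exact (hf1 (Metric.ball_subset_closedBall hy)).ge
        · rw [Set.indicator_of_notMem hy]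
          exact (hf01 y).1
      calc (0 : ℝ) < (ξ (Metric.ball p (r / 2))).toReal :=
            ENNReal.toReal_pos hball (measure_ne_top _ _)
        _ = ∫ y, (Metric.ball p (r / 2)).indicator (fun _ => (1 : ℝ)) y ∂ξ := by
            rw [integral_indicator_const _ measurableSet_ball]; simp [Measure.real]
        _ ≤ _ := hind
    set L : ℝ := ∫ y, f y ∂ξ with hL
    refine ⟨ENNReal.ofReal (L / 2), (ENNReal.ofReal_pos.2 (by linarith)).ne', ?_⟩
    have hev := (hlim f).eventually (eventually_gt_nhds (show L / 2 < L by linarith))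
    filter_upwards [hev] with n hn
    have hml : MeasurableSet ((fun y => g n • y) ⁻¹' Metric.ball p r) :=
      (Metric.isOpen_ball.preimage (continuous_const_smul (g n))).measurableSet
    have hup : ∫ y, f (g n • y) ∂η
        ≤ (η ((fun y => g n • y) ⁻¹' Metric.ball p r)).toReal := by
      calc ∫ y, f (g n • y) ∂η
          ≤ ∫ y, ((fun y => g n • y) ⁻¹' Metric.ball p r).indicator (fun _ => (1 : ℝ)) y ∂η := by
            refine integral_mono ?_ ((integrable_const (1 : ℝ)).indicator hml) ?_
            · exact ((f.comp ⟨fun y => g n • y, continuous_const_smul (g n)⟩).continuous).integrable_of_hasCompactSupport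
                (HasCompactSupport.of_compactSpace _)
            · intro y
              by_cases hy : g n • y ∈ Metric.ball p r
              · rw [Set.indicator_of_mem (Set.mem_preimage.2 hy)]
                exact (hf01 _).2
              · rw [Set.indicator_of_notMem (fun hh => hy (Set.mem_preimage.1 hh))]
                exact (hf0 hy).le
        _ = _ := by rw [integral_indicator_const _ hml]; simp [Measure.real]
    exact ENNReal.ofReal_le_of_le_toReal (by linarith)
  obtain ⟨δa, hδa, heva⟩ := main a ha
  obtain ⟨δb, hδb, hevb⟩ := main b hb
  obtain ⟨δc, hδc, hevc⟩ := main c hc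
  obtain ⟨N, hN⟩ := eventually_atTop.1 (heva.and (hevb.and hevc))
  -- Step 4: Borel–Cantelli-type argument on the product measure.
  set E : ℕ → Set M := fun n => (fun y => g n • y) ⁻¹' Metric.ball a r with hE
  set F : ℕ → Set M := fun n => (fun y => g n • y) ⁻¹' Metric.ball b r with hF
  set H : ℕ → Set M := fun n => (fun y => g n • y) ⁻¹' Metric.ball c r with hH
  have hEm : ∀ n, MeasurableSet (E n) := fun n =>
    (Metric.isOpen_ball.preimage (continuous_const_smul (g n))).measurableSet
  have hFm : ∀ n, MeasurableSet (F n) := fun n =>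
    (Metric.isOpen_ball.preimage (continuous_const_smul (g n))).measurableSet
  have hHm : ∀ n, MeasurableSet (H n) := fun n =>
    (Metric.isOpen_ball.preimage (continuous_const_smul (g n))).measurableSet
  set μ3 : Measure (M × M × M) := η.prod (η.prod η) with hμ3
  set T : ℕ → Set (M × M × M) := fun n => E n ×ˢ (F n ×ˢ H n) with hT
  have hTm : ∀ n, MeasurableSet (T n) := fun n => (hEm n).prod ((hFm n).prod (hHm n))
  have hTmN : ∀ n, N ≤ n → δa * (δb * δc) ≤ μ3 (T n) := by
    intro n hn
    have := hN n hn
    show δa * (δb * δc) ≤ η.prod (η.prod η) (E n ×ˢ (F n ×ˢ H n))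
    rw [Measure.prod_prod, Measure.prod_prod]
    exact mul_le_mul' this.1 (mul_le_mul' this.2.1 this.2.2)
  set W : ℕ → Set (M × M × M) := fun k => ⋃ m, T (N + k + m) with hW
  have hWanti : Antitone W := by
    intro k k' hk x hx
    simp only [hW, Set.mem_iUnion] at hx ⊢
    obtain ⟨m, hm⟩ := hx
    exact ⟨k' - k + m, by rwa [show N + k + (k' - k + m) = N + k' + m from by omega]⟩
  have hWm : ∀ k, NullMeasurableSet (W k) μ3 := fun k =>
    (MeasurableSet.iUnion fun m => hTm _).nullMeasurableSet
  haveI : IsProbabilityMeasure μ3 := by rw [hμ3]; infer_instance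
  have hWlb : ∀ k, δa * (δb * δc) ≤ μ3 (W k) := fun k =>
    le_trans (hTmN (N + k + 0) (by omega))
      (measure_mono (Set.subset_iUnion (fun m => T (N + k + m)) 0))
  have hiInt : μ3 (⋂ k, W k) = ⨅ k, μ3 (W k) :=
    hWanti.measure_iInter hWm ⟨0, measure_ne_top _ _⟩
  have hδ : δa * (δb * δc) ≠ 0 := mul_ne_zero hδa (mul_ne_zero hδb hδc)
  have hpos : μ3 (⋂ k, W k) ≠ 0 := by
    rw [hiInt]
    exact fun h => hδ (le_antisymm (le_trans (le_iInf hWlb) h.le) zero_le)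
  obtain ⟨⟨x, y, z⟩, hxyz⟩ := nonempty_of_measure_ne_zero hpos
  have hfreq : ∀ k, ∃ n, k ≤ n ∧ x ∈ E n ∧ y ∈ F n ∧ z ∈ H n := by
    intro k
    obtain ⟨m, hm⟩ := Set.mem_iUnion.1 (Set.mem_iInter.1 hxyz k)
    exact ⟨N + k + m, by omega, hm.1, hm.2.1, hm.2.2⟩
  -- Step 5: the triple (x,y,z) is pairwise distinct.
  obtain ⟨n₀, -, hx0, hy0, hz0⟩ := hfreq 0
  have hxy : x ≠ y := by
    rintro rfl
    exact Set.disjoint_left.1 hdab (Metric.ball_subset_closedBall hx0)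
      (Metric.ball_subset_closedBall hy0)
  have hxz : x ≠ z := by
    rintro rfl
    exact Set.disjoint_left.1 hdac (Metric.ball_subset_closedBall hx0)
      (Metric.ball_subset_closedBall hz0)
  have hyz : y ≠ z := by
    rintro rfl
    exact Set.disjoint_left.1 hdbc (Metric.ball_subset_closedBall hy0)
      (Metric.ball_subset_closedBall hz0)
  -- Step 6: contradiction with properness.
  set Q : Set (M × M × M) :=
    {(x, y, z)} ∪ Metric.closedBall a r ×ˢ (Metric.closedBall b r ×ˢ Metric.closedBall c r)
    with hQ
  have hQsub : Q ⊆ distinctTriples M := by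
    rintro ⟨u, v, w⟩ (h | h)
    · rw [Set.mem_singleton_iff, Prod.mk.injEq, Prod.mk.injEq] at h
      obtain ⟨rfl, rfl, rfl⟩ := h
      exact ⟨hxy, hxz, hyz⟩
    · exact ⟨fun e => Set.disjoint_left.1 hdab h.1 (e ▸ h.2.1),
        fun e => Set.disjoint_left.1 hdac h.1 (e ▸ h.2.2),
        fun e => Set.disjoint_left.1 hdbc h.2.1 (e ▸ h.2.2)⟩
  have hQcomp : IsCompact Q :=
    isCompact_singleton.union
      ((Metric.isClosed_closedBall.isCompact).prod
        ((Metric.isClosed_closedBall.isCompact).prod (Metric.isClosed_closedBall.isCompact)))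
  have hKcomp := hconv Q hQsub hQcomp
  have hPfreq : ∀ k, ∃ n, k ≤ n ∧ g n ∈ {g' : G |
      ((fun p : M × M × M => (g' • p.1, g' • p.2.1, g' • p.2.2)) '' Q ∩ Q).Nonempty} := by
    intro k
    obtain ⟨n, hkn, hxE, hyF, hzH⟩ := hfreq k
    refine ⟨n, hkn, ⟨(g n • x, g n • y, g n • z),
      ⟨⟨(x, y, z), Set.mem_union_left _ rfl, rfl⟩,
        Set.mem_union_right _
          ⟨Metric.ball_subset_closedBall hxE,
            Metric.ball_subset_closedBall hyF, Metric.ball_subset_closedBall hzH⟩⟩⟩⟩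
  have hev : {n : ℕ | g n ∈ (closure {g' : G |
      ((fun p : M × M × M => (g' • p.1, g' • p.2.1, g' • p.2.2)) '' Q ∩ Q).Nonempty})ᶜ}
      ∈ atTop := hg (mem_cocompact.2 ⟨_, hKcomp, Set.Subset.rfl⟩)
  obtain ⟨N', hN'⟩ := eventually_atTop.1 hev
  obtain ⟨n, hn, hmem⟩ := hPfreq N'
  exact hN' n hn (subset_closure hmem)
end

section
/- Let M be a compact metrizable space, G a closed subgroup of Homeo(M) (with the topology of uniform convergence), and η a Borel probability measure on M. Assume: (*)₁ every sequence (gₙ) in G such that (gₙ)_*η → η in the weak-* topology is bounded (precompact) in G; and (*)₂ for every g ∈ G \ {e} there exist h, k ∈ C(M) with ∫_M (h(g.y) − h(y))·k(y) dη(y) ≠ 0. Then every sequence (gₙ) in G satisfying ∫_M (h(gₙ.y) − h(y))·k(y) dη(y) → 0 for all h, k ∈ C(M) converges to the identity e in G. -/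
open MeasureTheory Filter Topology

/-- The group of self-homeomorphisms of a topological space, under composition. -/
instance homeomorphGroup {α : Type*} [TopologicalSpace α] : Group (α ≃ₜ α) where
  mul f g := g.trans f
  one := Homeomorph.refl α
  inv := Homeomorph.symm
  mul_assoc f g h := Homeomorph.ext fun _ => rfl
  one_mul f := Homeomorph.ext fun _ => rfl
  mul_one f := Homeomorph.ext fun _ => rfl
  inv_mul_cancel f := Homeomorph.ext fun x => f.symm_apply_apply x

/-- The topology of uniform convergence on the homeomorphism group of a compact space:
the topology induced from the compact-open (= uniform convergence) topology on `C(α, α)`. -/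
instance homeomorphTopology {α : Type*} [TopologicalSpace α] : TopologicalSpace (α ≃ₜ α) :=
  TopologicalSpace.induced (fun f : α ≃ₜ α => (f : C(α, α))) ContinuousMap.compactOpen

section aux
variable {M : Type*} [TopologicalSpace M] [CompactSpace M]
  [MeasurableSpace M] [OpensMeasurableSpace M] (η : Measure M) [IsProbabilityMeasure η]

lemma integrable_cm (f : C(M, ℝ)) : Integrable f η :=
  f.continuous.integrable_of_hasCompactSupport (isClosed_tsupport _).isCompact

lemma continuous_integral_cm : Continuous fun f : C(M, ℝ) => ∫ y, f y ∂η := by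
  refine (LipschitzWith.of_dist_le_mul (K := 1) fun f f' => ?_).continuous
  rw [dist_eq_norm, dist_eq_norm, NNReal.coe_one, one_mul,
    ← integral_sub (integrable_cm η f) (integrable_cm η f')]
  calc ‖∫ y, (f y - f' y) ∂η‖ ≤ ‖f - f'‖ * (η Set.univ).toReal := by
        refine norm_integral_le_of_norm_le_const (Eventually.of_forall fun y => ?_)
        simpa using (f - f').norm_coe_le_norm y
    _ = ‖f - f'‖ := by simp

lemma continuous_pairing (h k : C(M, ℝ)) :
    Continuous fun f : C(M, M) => ∫ y, (h (f y) - h y) * k y ∂η := by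
  have c1 : Continuous fun f : C(M, M) => (h.comp f - h) * k :=
    ((ContinuousMap.continuous_postcomp h).sub continuous_const).mul continuous_const
  have := (continuous_integral_cm η).comp c1
  convert this using 2 with f
  rfl
end aux


/-- Let `M` be a compact metrizable space, `G` a closed subgroup of
`Homeo(M)`, and `η` a Borel probability measure on `M` satisfying
`(*)₁`: every sequence `(gₙ)` in `G` with `(gₙ)_*η → η` weak-* is precompact in `G`; and
`(*)₂`: for every `g ≠ e` in `G` there are `h, k ∈ C(M)` with `∫ (h ∘ g − h)·k dη ≠ 0`.
Then every sequence `(gₙ)` in `G` with `∫ (h ∘ gₙ − h)·k dη → 0` for all `h, k ∈ C(M)`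
converges to the identity in `G`. -/
theorem tendsto_one_of_weak_star_conditions
    {M : Type*} [TopologicalSpace M] [CompactSpace M] [TopologicalSpace.MetrizableSpace M]
    [MeasurableSpace M] [BorelSpace M]
    (G : Subgroup (M ≃ₜ M)) (hGclosed : IsClosed (G : Set (M ≃ₜ M)))
    (η : Measure M) [IsProbabilityMeasure η]
    (hstar1 : ∀ g : ℕ → ↥G,
      (∀ f : C(M, ℝ),
        Tendsto (fun n => ∫ y, f ((g n : M ≃ₜ M) y) ∂η) atTop (𝓝 (∫ y, f y ∂η))) →
      IsCompact (closure (Set.range g)))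
    (hstar2 : ∀ g : ↥G, g ≠ 1 →
      ∃ h k : C(M, ℝ), ∫ y, (h ((g : M ≃ₜ M) y) - h y) * k y ∂η ≠ 0) :
    ∀ g : ℕ → ↥G,
      (∀ h k : C(M, ℝ),
        Tendsto (fun n => ∫ y, (h ((g n : M ≃ₜ M) y) - h y) * k y ∂η) atTop (𝓝 (0 : ℝ))) →
      Tendsto g atTop (𝓝 (1 : ↥G)) := by
  intro g hg
  letI : MetricSpace M := TopologicalSpace.metrizableSpaceMetric M
  have hemb : Topology.IsEmbedding (fun f : M ≃ₜ M => (f : C(M, M))) :=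
    ⟨⟨rfl⟩, fun f g hfg => Homeomorph.ext fun x => congrFun (congrArg DFunLike.coe hfg) x⟩
  haveI : TopologicalSpace.MetrizableSpace (M ≃ₜ M) := hemb.metrizableSpace
  haveI : TopologicalSpace.MetrizableSpace ↥G := Topology.IsEmbedding.subtypeVal.metrizableSpace
  -- continuity of the pairing functionals on G
  have hcont : ∀ h k : C(M, ℝ),
      Continuous fun a : ↥G => ∫ y, (h ((a : M ≃ₜ M) y) - h y) * k y ∂η := fun h k =>
    ((continuous_pairing η h k).comp (continuous_induced_dom (α := M ≃ₜ M))).comp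
      continuous_subtype_val
  -- integrability facts
  have hint : ∀ (a : ↥G) (f : C(M, ℝ)), Integrable (fun y => f ((a : M ≃ₜ M) y)) η := by
    intro a f
    exact (f.continuous.comp (a : M ≃ₜ M).continuous).integrable_of_hasCompactSupport
      (isClosed_tsupport _).isCompact
  -- precompactness via (*)₁
  have hcomp : IsCompact (closure (Set.range g)) := by
    refine hstar1 g fun f => ?_
    have key : ∀ n, ∫ y, f ((g n : M ≃ₜ M) y) ∂η
        = (∫ y, (f ((g n : M ≃ₜ M) y) - f y) * (1 : C(M, ℝ)) y ∂η) + ∫ y, f y ∂η := by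
      intro n
      simp only [ContinuousMap.one_apply, mul_one]
      rw [integral_sub (hint (g n) f) (integrable_cm η f)]
      ring
    have := (hg f 1).add (tendsto_const_nhds (x := ∫ y, f y ∂η))
    simp only [zero_add] at this
    simpa only [← key] using this
  refine tendsto_of_subseq_tendsto fun ns hns => ?_
  have hmem : ∀ n, g (ns n) ∈ closure (Set.range g) := fun n => subset_closure ⟨ns n, rfl⟩
  obtain ⟨a, -, ms, hms, hconv⟩ := hcomp.tendsto_subseq hmem
  refine ⟨ms, ?_⟩
  have ha : a = 1 := by
    by_contra hne
    obtain ⟨h, k, hhk⟩ := hstar2 a hne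
    have t1 : Tendsto (fun j => ∫ y, (h ((g (ns (ms j)) : M ≃ₜ M) y) - h y) * k y ∂η) atTop
        (𝓝 (∫ y, (h ((a : M ≃ₜ M) y) - h y) * k y ∂η)) :=
      ((hcont h k).continuousAt.tendsto).comp hconv
    have t2 : Tendsto (fun j => ∫ y, (h ((g (ns (ms j)) : M ≃ₜ M) y) - h y) * k y ∂η) atTop
        (𝓝 (0 : ℝ)) := (hg h k).comp (hns.comp hms.tendsto_atTop)
    exact hhk (tendsto_nhds_unique t1 t2)
  rw [ha] at hconv
  exact hconv
end

section
/- Let (X,m,T) be an invertible ergodic probability-measure-preserving system and let h ∈ L¹(X,m) be such that for m-almost every x ∈ X the ergodic sums h(x) + h(Tx) + ⋯ + h(Tⁿx) tend to +∞ as n → ∞. Then ∫_X h dm > 0. -/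
open MeasureTheory Filter Topology

/-- A real sequence tending to `atTop` is bounded below. -/
lemma bddBelow_range_of_tendsto_atTop {u : ℕ → ℝ} (h : Tendsto u atTop atTop) :
    BddBelow (Set.range u) := by
  obtain ⟨N, hN⟩ := (h.eventually_ge_atTop 0).exists_forall_of_atTop
  refine ⟨min 0 ((Finset.range (N + 1)).inf' (by simp) u), ?_⟩
  rintro _ ⟨n, rfl⟩
  rcases le_or_gt N n with hn | hn
  · exact le_trans (min_le_left _ _) (hN n hn)
  · exact le_trans (min_le_right _ _)
      (Finset.inf'_le u (Finset.mem_range.2 (by omega)))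

/-- Infimum recursion for partial-sum-like sequences. -/
lemma ciInf_rec {a : ℝ} {u v : ℕ → ℝ} (hu0 : u 0 = a) (huv : ∀ n, u (n + 1) = a + v n)
    (hv : BddBelow (Set.range v)) :
    ⨅ n, u n = a + min 0 (⨅ n, v n) := by
  obtain ⟨b, hb⟩ := hv
  have hbv : ∀ n, b ≤ v n := fun n => hb (Set.mem_range_self n)
  have hu : BddBelow (Set.range u) := by
    refine ⟨a + min 0 b, ?_⟩
    rintro _ ⟨n, rfl⟩
    cases n with
    | zero => rw [hu0]; nlinarith [min_le_left (0:ℝ) b]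
    | succ n => rw [huv n]; have := hbv n; have := min_le_right (0:ℝ) b; linarith
  have hvb : BddBelow (Set.range v) := ⟨b, hb⟩
  apply le_antisymm
  · rcases le_total (0:ℝ) (⨅ n, v n) with hc | hc
    · rw [min_eq_left hc]
      simpa [hu0] using ciInf_le hu 0
    · rw [min_eq_right hc]
      have : (⨅ n, u n) - a ≤ ⨅ n, v n := by
        apply le_ciInf
        intro n
        have := ciInf_le hu (n + 1)
        rw [huv n] at this
        linarith
      linarith
  · apply le_ciInf
    intro n
    cases n with
    | zero =>
      rw [hu0]
      have := min_le_left (0:ℝ) (⨅ n, v n); linarith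
    | succ n =>
      rw [huv n]
      have h1 : ⨅ n, v n ≤ v n := ciInf_le hvb n
      have h2 := min_le_right (0:ℝ) (⨅ n, v n)
      linarith

/-- If `ψ` is measurable and `x ↦ ψ x - ψ (T x)` is integrable w.r.t. a `T`-invariant
probability measure, its integral vanishes. -/
lemma integral_coboundary_eq_zero {X : Type*} [MeasurableSpace X]
    (m : Measure X) [IsProbabilityMeasure m] (T : X ≃ᵐ X) (hT : MeasurePreserving T m m)
    (ψ : X → ℝ) (hψ : Measurable ψ)
    (hg : Integrable (fun x => ψ x - ψ (T x)) m) :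
    ∫ x, (ψ x - ψ (T x)) ∂m = 0 := by
  set g : X → ℝ := fun x => ψ x - ψ (T x) with hgdef
  -- truncations
  set ψN : ℕ → X → ℝ := fun N x => max (-(N : ℝ)) (min (N : ℝ) (ψ x)) with hψN
  have hψNmeas : ∀ N, Measurable (ψN N) := fun N =>
    measurable_const.max (measurable_const.min hψ)
  have hψNbd : ∀ N x, |ψN N x| ≤ (N : ℝ) := by
    intro N x
    rw [abs_le]
    constructor
    · exact le_max_left _ _
    · exact max_le (by simp [neg_le_self (Nat.cast_nonneg (α := ℝ) N)]) (min_le_left _ _)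
  have hψNint : ∀ N, Integrable (ψN N) m := by
    intro N
    refine Integrable.mono' (integrable_const (N : ℝ)) (hψNmeas N).aestronglyMeasurable ?_
    exact Eventually.of_forall fun x => by simpa [Real.norm_eq_abs] using hψNbd N x
  -- Lipschitz bound
  have hlip : ∀ N a b, |ψN N a - ψN N b| ≤ |ψ a - ψ b| := by
    intro N a b
    have h1 : |max (-(N:ℝ)) (min (N:ℝ) (ψ a)) - max (-(N:ℝ)) (min (N:ℝ) (ψ b))| ≤
        |min (N:ℝ) (ψ a) - min (N:ℝ) (ψ b)| := by
      rw [max_comm (-(N:ℝ)) _, max_comm (-(N:ℝ)) _]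
      exact abs_max_sub_max_le_abs _ _ _
    have h2 : |min (N:ℝ) (ψ a) - min (N:ℝ) (ψ b)| ≤ |ψ a - ψ b| := by
      have := abs_min_sub_min_le_max (N:ℝ) (ψ a) (N:ℝ) (ψ b)
      simpa using this
    exact le_trans h1 h2
  have hgN_int : ∀ N, Integrable (fun x => ψN N x - ψN N (T x)) m := by
    intro N
    refine Integrable.mono hg
      (((hψNmeas N).sub ((hψNmeas N).comp T.measurable)).aestronglyMeasurable) ?_
    exact Eventually.of_forall fun x => by
      simpa [Real.norm_eq_abs] using hlip N x (T x)
  have hgN_zero : ∀ N, ∫ x, (ψN N x - ψN N (T x)) ∂m = 0 := by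
    intro N
    have hcomp : Integrable (fun x => ψN N (T x)) m := by
      refine Integrable.mono' (integrable_const (N : ℝ))
        ((hψNmeas N).comp T.measurable).aestronglyMeasurable ?_
      exact Eventually.of_forall fun x => by
        simpa [Real.norm_eq_abs] using hψNbd N (T x)
    rw [integral_sub (hψNint N) hcomp]
    rw [hT.integral_comp T.measurableEmbedding (ψN N), sub_self]
  -- pointwise convergence
  have hconv : ∀ x, Tendsto (fun N => ψN N x - ψN N (T x)) atTop (𝓝 (g x)) := by
    intro x
    obtain ⟨N₀, hN₀⟩ := exists_nat_ge (max |ψ x| |ψ (T x)|)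
    have hev : ∀ N ≥ N₀, ψN N x - ψN N (T x) = g x := by
      intro N hN
      have hNx : |ψ x| ≤ (N : ℝ) :=
        le_trans (le_trans (le_max_left _ _) hN₀) (by exact_mod_cast Nat.cast_le.2 hN)
      have hNTx : |ψ (T x)| ≤ (N : ℝ) :=
        le_trans (le_trans (le_max_right _ _) hN₀) (by exact_mod_cast Nat.cast_le.2 hN)
      have e1 : ψN N x = ψ x := by
        rw [abs_le] at hNx
        simp [hψN, min_eq_right hNx.2, max_eq_right hNx.1]
      have e2 : ψN N (T x) = ψ (T x) := by
        rw [abs_le] at hNTx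
        simp [hψN, min_eq_right hNTx.2, max_eq_right hNTx.1]
      rw [e1, e2]
    exact Tendsto.congr' (eventually_atTop.2 ⟨N₀, fun N hN => (hev N hN).symm⟩)
      tendsto_const_nhds
  -- dominated convergence
  have := tendsto_integral_of_dominated_convergence (fun x => |g x|)
    (fun N => ((hψNmeas N).sub ((hψNmeas N).comp T.measurable)).aestronglyMeasurable)
    hg.abs
    (fun N => Eventually.of_forall fun x => by
      simpa [Real.norm_eq_abs] using hlip N x (T x))
    (Eventually.of_forall hconv)
  have h0 : Tendsto (fun _ : ℕ => (0:ℝ)) atTop (𝓝 (∫ x, g x ∂m)) := by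
    simpa [hgN_zero] using this
  show ∫ x, g x ∂m = 0
  exact tendsto_nhds_unique h0 tendsto_const_nhds

/-- Let `(X, m, T)` be an invertible ergodic probability-measure-preserving
system and `h ∈ L¹(X, m)` such that for a.e. `x` the ergodic sums
`h(x) + h(Tx) + ⋯ + h(Tⁿx)` tend to `+∞`. Then `∫ h dm > 0`. -/
theorem integral_pos_of_ergodic_sums_tendsto_atTop
    {X : Type*} [MeasurableSpace X] [StandardBorelSpace X]
    (m : Measure X) [IsProbabilityMeasure m]
    (T : X ≃ᵐ X) (hT : Ergodic (⇑T) m)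
    (h : X → ℝ) (hint : Integrable h m)
    (hsum : ∀ᵐ x ∂m,
      Tendsto (fun n : ℕ => ∑ i ∈ Finset.range (n + 1), h ((⇑T)^[i] x)) atTop atTop) :
    0 < ∫ x, h x ∂m := by
  have hTP : MeasurePreserving (⇑T) m m := hT.toMeasurePreserving
  have hQ : Measure.QuasiMeasurePreserving (⇑T) m m := hTP.quasiMeasurePreserving
  -- a measurable representative of `h`
  set h' : X → ℝ := hint.1.mk h with hh'def
  have hmeas : Measurable h' := hint.1.stronglyMeasurable_mk.measurable
  have heq : h =ᵐ[m] h' := hint.1.ae_eq_mk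
  have hint' : Integrable h' m := hint.congr heq
  -- partial sums
  set S : ℕ → X → ℝ := fun n x => ∑ i ∈ Finset.range (n + 1), h' ((⇑T)^[i] x) with hSdef
  have hSmeas : ∀ n, Measurable (S n) := fun n =>
    Finset.measurable_sum _ (fun i _ => hmeas.comp (T.measurable.iterate i))
  have hS0 : ∀ x, S 0 x = h' x := fun x => by simp [hSdef]
  have hSrec : ∀ n x, S (n + 1) x = h' x + S n (T x) := by
    intro n x
    simp only [hSdef]
    rw [Finset.sum_range_succ']
    simp [Function.iterate_succ_apply, add_comm]
  have hSrec2 : ∀ n x, S (n + 1) x = S n x + h' ((⇑T)^[n + 1] x) := fun n x =>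
    Finset.sum_range_succ _ _
  -- transfer the hypothesis to `h'`
  have horb : ∀ᵐ x ∂m, ∀ i : ℕ, h' ((⇑T)^[i] x) = h ((⇑T)^[i] x) := by
    rw [ae_all_iff]
    intro i
    filter_upwards [(hQ.iterate i).ae_eq heq.symm] with x hx using hx
  have htend : ∀ᵐ x ∂m, Tendsto (fun n => S n x) atTop atTop := by
    filter_upwards [hsum, horb] with x hx horbx
    refine hx.congr fun n => ?_
    exact Finset.sum_congr rfl fun i _ => (horbx i).symm
  -- the infimum of the partial sums and its negative part
  set φ : X → ℝ := fun x => ⨅ n, S n x with hφdef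
  have hφmeas : Measurable φ := Measurable.iInf hSmeas
  set ψ : X → ℝ := fun x => min 0 (φ x) with hψdef
  have hψmeas : Measurable ψ := measurable_const.min hφmeas
  -- the key recursion `φ = h' + ψ ∘ T` a.e.
  have hid : ∀ᵐ x ∂m, φ x = h' x + ψ (T x) := by
    filter_upwards [htend, hQ.ae htend] with x hx hxT
    exact ciInf_rec (hS0 x) (fun n => hSrec n x) (bddBelow_range_of_tendsto_atTop hxT)
  have hφ_le : ∀ᵐ x ∂m, φ x ≤ h' x := by
    filter_upwards [htend] with x hx
    have := ciInf_le (bddBelow_range_of_tendsto_atTop hx) 0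
    rwa [hS0 x] at this
  -- the positive part of φ is integrable
  set φp : X → ℝ := fun x => max 0 (φ x) with hφpdef
  have hφpmeas : Measurable φp := measurable_const.max hφmeas
  have hφpint : Integrable φp m := by
    refine hint'.abs.mono' hφpmeas.aestronglyMeasurable ?_
    filter_upwards [hφ_le] with x hx
    rw [Real.norm_eq_abs, abs_of_nonneg (le_max_left _ _)]
    exact max_le (abs_nonneg _) (hx.trans (le_abs_self _))
  -- the decomposition h' = φ⁺ + (ψ - ψ ∘ T)
  have hdecomp : h' =ᵐ[m] fun x => φp x + (ψ x - ψ (T x)) := by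
    filter_upwards [hid] with x hx
    have hmm : max 0 (φ x) + min 0 (φ x) = 0 + φ x := max_add_min 0 (φ x)
    simp only [hφpdef, hψdef]
    simp only [hψdef] at hx
    linarith
  have hgint : Integrable (fun x => ψ x - ψ (T x)) m := by
    refine (hint'.sub hφpint).congr ?_
    filter_upwards [hdecomp] with x hx
    simp [hx]
  have hzero : ∫ x, (ψ x - ψ (T x)) ∂m = 0 :=
    integral_coboundary_eq_zero m T hTP ψ hψmeas hgint
  have hint_eq : ∫ x, h x ∂m = ∫ x, φp x ∂m := by
    rw [integral_congr_ae heq, integral_congr_ae hdecomp,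
      integral_add hφpint hgint, hzero, add_zero]
  rcases (integral_nonneg (f := φp) (fun x => le_max_left (0:ℝ) (φ x))).lt_or_eq with hpos | hzero'
  · rwa [hint_eq]
  exfalso
  -- then φ ≤ 0 a.e. and the sums are cocycles over φ
  have hφp0 : φp =ᵐ[m] 0 :=
    (integral_eq_zero_iff_of_nonneg (f := φp) (fun x => le_max_left (0:ℝ) (φ x)) hφpint).1 hzero'.symm
  have hφ_nonpos : ∀ᵐ x ∂m, φ x ≤ 0 := by
    filter_upwards [hφp0] with x hx
    have : φ x ≤ max 0 (φ x) := le_max_right _ _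
    simpa [hφpdef] using this.trans_eq (by simpa [hφpdef] using hx)
  have hid2 : ∀ᵐ x ∂m, φ x = h' x + φ (T x) := by
    filter_upwards [hid, hQ.ae hφ_nonpos] with x hx hxT
    rw [hx]
    congr 1
    exact min_eq_right hxT
  have hiter : ∀ᵐ x ∂m, ∀ n : ℕ, φ x = S n x + φ ((⇑T)^[n + 1] x) := by
    have hall : ∀ᵐ x ∂m, ∀ k : ℕ, φ ((⇑T)^[k] x) = h' ((⇑T)^[k] x) + φ ((⇑T)^[k + 1] x) := by
      rw [ae_all_iff]
      intro k
      filter_upwards [(hQ.iterate k).ae hid2] with x hx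
      rw [Function.iterate_succ_apply']
      exact hx
    filter_upwards [hall] with x hx
    intro n
    induction n with
    | zero => simpa [hSdef] using hx 0
    | succ n ih =>
      have e1 := hx (n + 1)
      have e2 := hSrec2 n x
      linarith
  -- choose `c` with `m {φ ≥ -c} > 1/2`
  set A : ℕ → Set X := fun c => {x | -(c : ℝ) ≤ φ x} with hAdef
  have hAmeas : ∀ c, MeasurableSet (A c) := fun c => measurableSet_le measurable_const hφmeas
  have hAmono : Monotone A := by
    intro c c' hcc x hx
    simp only [hAdef, Set.mem_setOf_eq] at hx ⊢
    exact le_trans (neg_le_neg (Nat.cast_le.mpr hcc)) hx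
  have hAunion : ⋃ c, A c = Set.univ := by
    ext x
    simp only [Set.mem_iUnion, Set.mem_univ, iff_true, hAdef, Set.mem_setOf_eq]
    obtain ⟨c, hc⟩ := exists_nat_ge (-φ x)
    exact ⟨c, neg_le.mpr hc⟩
  have htendA : Tendsto (fun c => m (A c)) atTop (𝓝 1) := by
    have := tendsto_measure_iUnion_atTop (μ := m) hAmono
    rwa [hAunion, measure_univ] at this
  have hhalf : (1 : ENNReal) / 2 < 1 := ENNReal.half_lt_self one_ne_zero ENNReal.one_ne_top
  obtain ⟨c, hc⟩ := (htendA.eventually (lt_mem_nhds hhalf)).exists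
  -- choose `N` with `m (E N) > 1/2` where `E N = {∀ n, c < S (N+n)}`
  set E : ℕ → Set X := fun N => ⋂ n, {x | (c : ℝ) < S (N + n) x} with hEdef
  have hEmeas : ∀ N, MeasurableSet (E N) := fun N =>
    MeasurableSet.iInter fun n => measurableSet_lt measurable_const (hSmeas _)
  have hEmono : Monotone E := by
    intro N M hNM x hx
    simp only [hEdef, Set.mem_iInter, Set.mem_setOf_eq] at hx ⊢
    intro n
    have h2 := hx (M - N + n)
    rwa [show N + (M - N + n) = M + n by omega] at h2
  have hEunion : ∀ᵐ x ∂m, x ∈ ⋃ N, E N := by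
    filter_upwards [htend] with x hx
    obtain ⟨N, hN⟩ := eventually_atTop.1 (hx.eventually_gt_atTop (c : ℝ))
    exact Set.mem_iUnion.2 ⟨N, Set.mem_iInter.2 fun n => hN (N + n) (Nat.le_add_right N n)⟩
  have hEuniv : m (⋃ N, E N) = 1 := by
    have h1 : m {x | ¬ x ∈ ⋃ N, E N} = 0 := by
      rw [← ae_iff]
      exact hEunion
    have h2 : (1 : ENNReal) ≤ m (⋃ N, E N) := by
      calc (1 : ENNReal) = m Set.univ := measure_univ.symm
        _ = m ((⋃ N, E N) ∪ (⋃ N, E N)ᶜ) := by rw [Set.union_compl_self]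
        _ ≤ m (⋃ N, E N) + m ((⋃ N, E N)ᶜ) := measure_union_le _ _
        _ = m (⋃ N, E N) := by rw [show ((⋃ N, E N)ᶜ : Set X) = {x | ¬ x ∈ ⋃ N, E N} from rfl, h1, add_zero]
    exact le_antisymm prob_le_one h2
  have htendE : Tendsto (fun N => m (E N)) atTop (𝓝 1) := by
    have := tendsto_measure_iUnion_atTop (μ := m) hEmono
    rwa [hEuniv] at this
  obtain ⟨N, hN⟩ := (htendE.eventually (lt_mem_nhds hhalf)).exists
  -- the contradiction
  have hkey : ∀ᵐ x ∂m, x ∉ ((⇑T)^[N + 1] ⁻¹' (A c)) ∩ E N := by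
    filter_upwards [hiter, hφ_nonpos] with x hx hx0
    rintro ⟨hxA, hxE⟩
    have h1 : φ x = S N x + φ ((⇑T)^[N + 1] x) := hx N
    have h2 : (c : ℝ) < S N x := by
      have := Set.mem_iInter.1 hxE 0
      simpa using this
    have h3 : -(c : ℝ) ≤ φ ((⇑T)^[N + 1] x) := hxA
    linarith
  have hnull : m (((⇑T)^[N + 1] ⁻¹' (A c)) ∩ E N) = 0 := by
    rw [ae_iff] at hkey
    simpa only [not_not, Set.setOf_mem_eq] using hkey
  have hpre : m ((⇑T)^[N + 1] ⁻¹' (A c)) = m (A c) :=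
    (hTP.iterate (N + 1)).measure_preimage (hAmeas c).nullMeasurableSet
  have hsub : m (A c) ≤ m ((E N)ᶜ) := by
    rw [← hpre]
    calc m ((⇑T)^[N + 1] ⁻¹' (A c))
        ≤ m (((⇑T)^[N + 1] ⁻¹' (A c)) ∩ E N) + m (((⇑T)^[N + 1] ⁻¹' (A c)) \ E N) :=
          measure_le_inter_add_diff _ _ _
      _ = m (((⇑T)^[N + 1] ⁻¹' (A c)) \ E N) := by rw [hnull, zero_add]
      _ ≤ m ((E N)ᶜ) := measure_mono (Set.diff_subset_compl _ _)
  have hsum2 : m (E N) + m ((E N)ᶜ) = 1 := by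
    rw [measure_add_measure_compl (hEmeas N), measure_univ]
  have hlt : (1 : ENNReal) < m (A c) + m (E N) := by
    have := ENNReal.add_lt_add hc hN
    rwa [ENNReal.add_halves] at this
  have hle : m (A c) + m (E N) ≤ 1 := by
    calc m (A c) + m (E N) ≤ m ((E N)ᶜ) + m (E N) := add_le_add hsub le_rfl
      _ = 1 := by rw [add_comm]; exact hsum2
  exact absurd (hlt.trans_le hle) (lt_irrefl _)
end
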